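/- Proposition 1 (type-i inputs). Assume J¹ ≠ 0. Let k₁ be an integer with 2 ≤ k₁ and 2·k₁ ≤ L, and let Q be a k₁-candidate. Then the expansion coefficient c_A of Q vanishes for every (k₁,ℓ₂)-support Pauli product A of type i, for every ℓ₂ ∈ {1,...,L} and every position of its bounding box. -/
import Mathlib


open scoped Classical

namespace Ising2D

/-- Single-site Pauli operators (including the identity). -/
inductive PauliOp : Type
  | I : PauliOp
  | X : PauliOp
  | Y : PauliOp
  | Z : PauliOp
  deriving DecidableEq

/-- The 2×2 matrices of the single-site Pauli operators. -/
noncomputable def pauliMat : PauliOp → Matrix (Fin 2) (Fin 2) ℂ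
  | PauliOp.I => 1
  | PauliOp.X => !![0, 1; 1, 0]
  | PauliOp.Y => !![0, -Complex.I; Complex.I, 0]
  | PauliOp.Z => !![1, 0; 0, -1]

/-- Sites of the two-dimensional periodic lattice `Λ = (ℤ/L)²`. -/
abbrev Site (L : ℕ) := ZMod L × ZMod L

variable {L : ℕ}

/-- The matrix (on `⨂_{r ∈ Λ} ℂ²`, realized as matrices indexed by spin
configurations `Λ → Fin 2`) of the Pauli product `∏_r A_r`. -/
noncomputable def pauliProd [NeZero L] (A : Site L → PauliOp) :
    Matrix (Site L → Fin 2) (Site L → Fin 2) ℂ :=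
  fun s t => ∏ p : Site L, pauliMat (A p) (s p) (t p)

/-- The (unique) expansion coefficient of an operator `Q` on the Pauli product `A`,
obtained from the trace inner product (Pauli products form an orthogonal basis with
`Tr (P_A P_B) = 2^|Λ| δ_{A,B}`). -/
noncomputable def coeff [NeZero L] (Q : Matrix (Site L → Fin 2) (Site L → Fin 2) ℂ)
    (A : Site L → PauliOp) : ℂ :=
  Matrix.trace (pauliProd A * Q) / 2 ^ Fintype.card (Site L)

/-- The Pauli product acting as `P` at site `r` and trivially elsewhere. -/
def singleSite (r : Site L) (P : PauliOp) : Site L → PauliOp :=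
  fun p => if p = r then P else PauliOp.I

/-- The Pauli product acting as `Z` at the two sites `r, s` and trivially elsewhere. -/
def twoSiteZZ (r s : Site L) : Site L → PauliOp :=
  fun p => if p = r ∨ p = s then PauliOp.Z else PauliOp.I

/-- The Hamiltonian
`H = Σ_r (J¹ Z_r Z_{r+e₁} + J² Z_r Z_{r+e₂} + hˣ X_r + h^z Z_r)`. -/
noncomputable def ham [NeZero L] (J1 J2 hx hz : ℝ) :
    Matrix (Site L → Fin 2) (Site L → Fin 2) ℂ :=
  ∑ r : Site L,
    ((J1 : ℂ) • pauliProd (twoSiteZZ r (r.1 + 1, r.2))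
      + (J2 : ℂ) • pauliProd (twoSiteZZ r (r.1, r.2 + 1))
      + (hx : ℂ) • pauliProd (singleSite r PauliOp.X)
      + (hz : ℂ) • pauliProd (singleSite r PauliOp.Z))

/-- `A` is an `(ℓ₁,ℓ₂)`-support Pauli product with (minimal) bounding box cornered
at `r`: its support is contained in the box
`{r₁,...,r₁+ℓ₁−1} × {r₂,...,r₂+ℓ₂−1}` and it acts nontrivially at some site on each
of the four edges of the box. -/
def IsSupportedAt (A : Site L → PauliOp) (r : Site L) (ℓ₁ ℓ₂ : ℕ) : Prop :=
  (∀ p : Site L, A p ≠ PauliOp.I →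
      (∃ n : ℕ, n < ℓ₁ ∧ p.1 = r.1 + (n : ZMod L)) ∧
      (∃ n : ℕ, n < ℓ₂ ∧ p.2 = r.2 + (n : ZMod L))) ∧
  (∃ p : Site L, A p ≠ PauliOp.I ∧ p.1 = r.1) ∧
  (∃ p : Site L, A p ≠ PauliOp.I ∧ p.1 = r.1 + ((ℓ₁ - 1 : ℕ) : ZMod L)) ∧
  (∃ p : Site L, A p ≠ PauliOp.I ∧ p.2 = r.2) ∧
  (∃ p : Site L, A p ≠ PauliOp.I ∧ p.2 = r.2 + ((ℓ₂ - 1 : ℕ) : ZMod L))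

/-- `A` is an `(ℓ₁,ℓ₂)`-support Pauli product. -/
def IsSupportOp (ℓ₁ ℓ₂ : ℕ) (A : Site L → PauliOp) : Prop :=
  ∃ r : Site L, IsSupportedAt A r ℓ₁ ℓ₂

/-- `Q` is a `(k₁,k₂)`-local conserved quantity: it commutes with `H`, it is a linear
combination of `(ℓ₁,ℓ₂)`-support Pauli products with `ℓ₁ ≤ k₁`, `ℓ₂ ≤ k₂`, and the
maximal `ℓ₁` (resp. `ℓ₂`) occurring with nonzero coefficient equals `k₁` (resp. `k₂`). -/
def IsLocalConserved [NeZero L] (J1 J2 hx hz : ℝ) (k₁ k₂ : ℕ)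
    (Q : Matrix (Site L → Fin 2) (Site L → Fin 2) ℂ) : Prop :=
  Q * ham (L := L) J1 J2 hx hz = ham (L := L) J1 J2 hx hz * Q ∧
  (∀ A, coeff Q A ≠ 0 → ∃ ℓ₁ ℓ₂ : ℕ, ℓ₁ ≤ k₁ ∧ ℓ₂ ≤ k₂ ∧ IsSupportOp ℓ₁ ℓ₂ A) ∧
  (∃ A ℓ₂, coeff Q A ≠ 0 ∧ ℓ₂ ≤ k₂ ∧ IsSupportOp k₁ ℓ₂ A) ∧
  (∃ A ℓ₁, coeff Q A ≠ 0 ∧ ℓ₁ ≤ k₁ ∧ IsSupportOp ℓ₁ k₂ A)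

/-- `Q` is a `k₁`-candidate: it commutes with `H` and is a linear combination of
`(ℓ₁,ℓ₂)`-support Pauli products with `ℓ₁ ≤ k₁` (`ℓ₂ ≤ L` arbitrary). -/
def IsCandidate [NeZero L] (J1 J2 hx hz : ℝ) (k₁ : ℕ)
    (Q : Matrix (Site L → Fin 2) (Site L → Fin 2) ℂ) : Prop :=
  Q * ham (L := L) J1 J2 hx hz = ham (L := L) J1 J2 hx hz * Q ∧
  ∀ A, coeff Q A ≠ 0 → ∃ ℓ₁ ℓ₂ : ℕ, ℓ₁ ≤ k₁ ∧ ℓ₂ ≤ L ∧ IsSupportOp ℓ₁ ℓ₂ A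

/-- First coordinate of the upper edge of a box cornered at `r`. -/
def upperEdge (r : Site L) : ZMod L := r.1

/-- First coordinate of the lower edge of a box cornered at `r` with height `ℓ₁`. -/
def lowerEdge (r : Site L) (ℓ₁ : ℕ) : ZMod L := r.1 + ((ℓ₁ - 1 : ℕ) : ZMod L)

/-- `A` contains `X` or `Y` at some site with first coordinate `a`. -/
def HasXYOn (A : Site L → PauliOp) (a : ZMod L) : Prop :=
  ∃ p : Site L, p.1 = a ∧ (A p = PauliOp.X ∨ A p = PauliOp.Y)

/-- Every operator of `A` at sites with first coordinate `a` is `Z` or `I`. -/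
def AllZIOn (A : Site L → PauliOp) (a : ZMod L) : Prop :=
  ∀ p : Site L, p.1 = a → A p = PauliOp.Z ∨ A p = PauliOp.I

/-- `A` carries at least two `Z`'s on the line with first coordinate `a`. -/
def TwoZOn (A : Site L → PauliOp) (a : ZMod L) : Prop :=
  ∃ p q : Site L, p ≠ q ∧ p.1 = a ∧ q.1 = a ∧ A p = PauliOp.Z ∧ A q = PauliOp.Z

/-- `A` carries exactly one `Z` on the line with first coordinate `a`. -/
def OneZOn (A : Site L → PauliOp) (a : ZMod L) : Prop :=
  ∃! p : Site L, p.1 = a ∧ A p = PauliOp.Z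

/-- The single-column Pauli product with `P` at site `r`, `R` at site `r+(k−1)e₁`,
`X` at sites `r+n e₁` for `n = 1,...,k−2`, and `I` elsewhere. -/
noncomputable def colPQ (P R : PauliOp) (k : ℕ) (r : Site L) : Site L → PauliOp :=
  fun p =>
    if p = r then P
    else if p = (r.1 + ((k - 1 : ℕ) : ZMod L), r.2) then R
    else if ∃ n : ℕ, 1 ≤ n ∧ n ≤ k - 2 ∧ p = (r.1 + (n : ZMod L), r.2) then PauliOp.X
    else PauliOp.I



-- ===================== auxiliary material =====================

open PauliOp in
/-- Product of two Pauli letters, forgetting the phase. -/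
def pmul : PauliOp → PauliOp → PauliOp
  | I, a => a
  | a, I => a
  | X, X => I | Y, Y => I | Z, Z => I
  | X, Y => Z | Y, X => Z
  | Y, Z => X | Z, Y => X
  | Z, X => Y | X, Z => Y

open PauliOp in
/-- The phase in the product of two Pauli letters. -/
noncomputable def pphase : PauliOp → PauliOp → ℂ
  | X, Y => Complex.I | Y, Z => Complex.I | Z, X => Complex.I
  | Y, X => -Complex.I | Z, Y => -Complex.I | X, Z => -Complex.I
  | _, _ => 1

/-- Exchange `X` and `Y`. -/
def pflip : PauliOp → PauliOp
  | PauliOp.X => PauliOp.Y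
  | PauliOp.Y => PauliOp.X
  | a => a

lemma pauliMat_mul (a b : PauliOp) :
    pauliMat a * pauliMat b = pphase a b • pauliMat (pmul a b) := by
  rcases a <;> rcases b <;>
    · ext i j
      fin_cases i <;> fin_cases j <;>
        simp [pauliMat, pmul, pphase, Matrix.mul_apply, Fin.sum_univ_two,
          Matrix.one_apply, Complex.ext_iff]

lemma pmul_comm (a b : PauliOp) : pmul a b = pmul b a := by rcases a <;> rcases b <;> rfl

lemma pmul_I_left (a : PauliOp) : pmul PauliOp.I a = a := by rcases a <;> rfl

lemma pphase_I_left (a : PauliOp) : pphase PauliOp.I a = 1 := by rcases a <;> rfl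
lemma pphase_I_right (a : PauliOp) : pphase a PauliOp.I = 1 := by rcases a <;> rfl

lemma pauliProd_mul [NeZero L] (A B : Site L → PauliOp) :
    pauliProd A * pauliProd B =
      (∏ p : Site L, pphase (A p) (B p)) • pauliProd (fun p => pmul (A p) (B p)) := by
  ext s t
  have h1 : (pauliProd A * pauliProd B) s t
      = ∑ u : Site L → Fin 2, ∏ p : Site L,
          (pauliMat (A p) (s p) (u p) * pauliMat (B p) (u p) (t p)) := by
    simp [Matrix.mul_apply, pauliProd, Finset.prod_mul_distrib]
  rw [h1]
  have h3 : (∑ u : Site L → Fin 2, ∏ p : Site L,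
      (fun p (i : Fin 2) => pauliMat (A p) (s p) i * pauliMat (B p) i (t p)) p (u p))
      = ∏ p : Site L, ∑ i : Fin 2, pauliMat (A p) (s p) i * pauliMat (B p) i (t p) := by
    rw [Finset.prod_univ_sum]
    simp
  calc ∑ u : Site L → Fin 2, ∏ p : Site L,
        (pauliMat (A p) (s p) (u p) * pauliMat (B p) (u p) (t p))
      = ∏ p : Site L, ∑ i : Fin 2, pauliMat (A p) (s p) i * pauliMat (B p) i (t p) := by
        rw [← h3]
    _ = ∏ p : Site L, (pauliMat (A p) * pauliMat (B p)) (s p) (t p) := by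
        simp [Matrix.mul_apply]
    _ = ∏ p : Site L, (pphase (A p) (B p) • pauliMat (pmul (A p) (B p))) (s p) (t p) := by
        simp_rw [pauliMat_mul]
    _ = _ := by
        simp [pauliProd, Finset.prod_mul_distrib, Matrix.smul_apply, smul_eq_mul]

/-- The scalar in the commutator of two Pauli products. -/
noncomputable def combCoef [NeZero L] (h B : Site L → PauliOp) : ℂ :=
  (∏ p : Site L, pphase (h p) (B p)) - ∏ p : Site L, pphase (B p) (h p)

lemma comm_pauliProd [NeZero L] (h B : Site L → PauliOp) :
    pauliProd h * pauliProd B - pauliProd B * pauliProd h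
      = combCoef h B • pauliProd (fun p => pmul (h p) (B p)) := by
  rw [pauliProd_mul, pauliProd_mul, combCoef, sub_smul]
  have : (fun p => pmul (B p) (h p)) = fun p => pmul (h p) (B p) := by
    funext p; exact pmul_comm _ _
  rw [this]

/-- The contribution of one Hamiltonian term to `Tr([H, P_B] Q)`. -/
noncomputable def Tterm [NeZero L] (Q : Matrix (Site L → Fin 2) (Site L → Fin 2) ℂ)
    (B h : Site L → PauliOp) : ℂ :=
  combCoef h B * Matrix.trace (pauliProd (fun p => pmul (h p) (B p)) * Q)

lemma trace_comm_smul [NeZero L] (c : ℂ) (h B : Site L → PauliOp)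
    (Q : Matrix (Site L → Fin 2) (Site L → Fin 2) ℂ) :
    Matrix.trace ((c • pauliProd h * pauliProd B - pauliProd B * (c • pauliProd h)) * Q)
      = c * Tterm Q B h := by
  rw [Matrix.smul_mul, Matrix.mul_smul, ← smul_sub, comm_pauliProd, smul_smul,
    Matrix.smul_mul, Matrix.trace_smul, Tterm, smul_eq_mul, mul_assoc]

/-- The master identity `0 = Tr([H, P_B] Q)`, expanded into Hamiltonian terms. -/
lemma master [NeZero L] (J1 J2 hx hz : ℝ)
    (Q : Matrix (Site L → Fin 2) (Site L → Fin 2) ℂ)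
    (hcomm : Q * ham (L := L) J1 J2 hx hz = ham (L := L) J1 J2 hx hz * Q)
    (B : Site L → PauliOp) :
    ∑ r : Site L,
      ((J1 : ℂ) * Tterm Q B (twoSiteZZ r (r.1 + 1, r.2))
        + (J2 : ℂ) * Tterm Q B (twoSiteZZ r (r.1, r.2 + 1))
        + (hx : ℂ) * Tterm Q B (singleSite r PauliOp.X)
        + (hz : ℂ) * Tterm Q B (singleSite r PauliOp.Z)) = 0 := by
  set H := ham (L := L) J1 J2 hx hz with hH
  have key : Matrix.trace ((H * pauliProd B - pauliProd B * H) * Q) = 0 := by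
    rw [Matrix.sub_mul, Matrix.trace_sub, Matrix.mul_assoc, Matrix.mul_assoc,
      Matrix.trace_mul_comm H (pauliProd B * Q), Matrix.mul_assoc, hcomm, sub_self]
  rw [← key, hH, ham, Finset.sum_mul, Matrix.mul_sum, ← Finset.sum_sub_distrib,
    Finset.sum_mul, Matrix.trace_sum]
  refine Finset.sum_congr rfl fun r _ => ?_
  rw [Matrix.add_mul, Matrix.add_mul, Matrix.add_mul, Matrix.mul_add, Matrix.mul_add,
    Matrix.mul_add]
  have h4 : ∀ M1 M2 M3 M4 N1 N2 N3 N4 : Matrix (Site L → Fin 2) (Site L → Fin 2) ℂ,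
      (M1 + M2 + M3 + M4) - (N1 + N2 + N3 + N4)
        = (M1 - N1) + (M2 - N2) + (M3 - N3) + (M4 - N4) := by
    intros; abel
  rw [h4, Matrix.add_mul, Matrix.add_mul, Matrix.add_mul, Matrix.trace_add,
    Matrix.trace_add, Matrix.trace_add, trace_comm_smul, trace_comm_smul,
    trace_comm_smul, trace_comm_smul]

lemma natCast_zmod_inj [NeZero L] {a b : ℕ} (ha : a < L) (hb : b < L)
    (h : (a : ZMod L) = (b : ZMod L)) : a = b := by
  have := congrArg ZMod.val h
  rwa [ZMod.val_cast_of_lt ha, ZMod.val_cast_of_lt hb] at this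

/-- If an operator is nontrivial at two sites whose first coordinates differ by
exactly `k₁`, it has no bounding box of height `≤ k₁`, so its coefficient vanishes. -/
lemma coeff_far [NeZero L] {J1 J2 hx hz : ℝ} {k₁ : ℕ}
    {Q : Matrix (Site L → Fin 2) (Site L → Fin 2) ℂ}
    (hQ : IsCandidate J1 J2 hx hz k₁ Q) (hkL : 2 * k₁ ≤ L)
    (C : Site L → PauliOp) (u v : Site L)
    (hu : C u ≠ PauliOp.I) (hv : C v ≠ PauliOp.I)
    (hdiff : v.1 = u.1 + (k₁ : ZMod L)) : coeff Q C = 0 := by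
  by_contra h
  obtain ⟨ℓ₁, ℓ₂, hℓ₁, -, r'', hsup⟩ := hQ.2 C h
  obtain ⟨⟨nu, hnu, hu1⟩, -⟩ := hsup.1 u hu
  obtain ⟨⟨nv, hnv, hv1⟩, -⟩ := hsup.1 v hv
  rw [hu1, hv1] at hdiff
  have hcast : ((nv : ℕ) : ZMod L) = ((nu + k₁ : ℕ) : ZMod L) := by
    push_cast
    have h5 : r''.1 + (nv : ZMod L) = r''.1 + ((nu : ZMod L) + (k₁ : ZMod L)) := by
      rw [hdiff, add_assoc]
    exact add_left_cancel h5
  have := natCast_zmod_inj (lt_of_lt_of_le hnv (le_trans hℓ₁ (by omega))) (by omega) hcast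
  omega

lemma prod_pair_eq [NeZero L] (g : Site L → ℂ) (a b : Site L) (hab : a ≠ b)
    (hout : ∀ q, q ≠ a → q ≠ b → g q = 1) : ∏ q : Site L, g q = g a * g b := by
  rw [← Finset.prod_pair hab]
  refine (Finset.prod_subset (Finset.subset_univ {a, b}) ?_).symm
  intro x _ hx
  simp only [Finset.mem_insert, Finset.mem_singleton] at hx
  push_neg at hx
  exact hout x hx.1 hx.2

/-- **Proposition 1** (type-i inputs). Assume `J¹ ≠ 0`. For `2 ≤ k₁` with `2·k₁ ≤ L`
and any `k₁`-candidate `Q`, the coefficient of `Q` vanishes on every `(k₁,ℓ₂)`-support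
Pauli product that contains `X` or `Y` on both its upper and lower edges. -/
theorem prop_type_i (L : ℕ) [NeZero L] (J1 J2 hx hz : ℝ) (hJ1 : J1 ≠ 0)
    (k₁ : ℕ) (hk₁ : 2 ≤ k₁) (hk₁L : 2 * k₁ ≤ L)
    (Q : Matrix (Site L → Fin 2) (Site L → Fin 2) ℂ)
    (hQ : IsCandidate J1 J2 hx hz k₁ Q)
    (ℓ₂ : ℕ) (hℓ₂1 : 1 ≤ ℓ₂) (hℓ₂L : ℓ₂ ≤ L)
    (A : Site L → PauliOp) (r : Site L)
    (hsupp : IsSupportedAt A r k₁ ℓ₂)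
    (hup : HasXYOn A (upperEdge r)) (hlow : HasXYOn A (lowerEdge r k₁)) :
    coeff Q A = 0 := by
  have hkL : k₁ < L := by omega
  have hcast0 : ∀ m : ℕ, 0 < m → m < L → ((m : ℕ) : ZMod L) ≠ 0 := by
    intro m h1 h2 h
    have := natCast_zmod_inj h2 (by omega : 0 < L) (by simpa using h)
    omega
  obtain ⟨p, hp1, hpXY⟩ := hup
  obtain ⟨f, hf1, hfXY⟩ := hlow
  rw [upperEdge] at hp1
  rw [lowerEdge] at hf1
  have hk1c : ((k₁ - 1 : ℕ) : ZMod L) = (k₁ : ZMod L) - 1 := by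
    rw [Nat.cast_sub (by omega : 1 ≤ k₁), Nat.cast_one]
  set u₀ : Site L := (r.1 - 1, p.2) with hu₀def
  have hu₀1 : u₀.1 = r.1 - 1 := rfl
  have hu₀2 : u₀.2 = p.2 := rfl
  -- distinctness of the three distinguished sites
  have hpu : p ≠ u₀ := by
    intro h
    have h1 := congrArg Prod.fst h
    rw [hp1, hu₀1] at h1
    have h0 : ((1 : ℕ) : ZMod L) = 0 := by push_cast; linear_combination h1
    exact hcast0 1 one_pos (by omega) h0
  have hfp : f ≠ p := by
    intro h
    have h1 := congrArg Prod.fst h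
    rw [hf1, hp1] at h1
    have h0 : ((k₁ - 1 : ℕ) : ZMod L) = 0 := by linear_combination h1
    exact hcast0 (k₁ - 1) (by omega) (by omega) h0
  have hfu : f ≠ u₀ := by
    intro h
    have h1 := congrArg Prod.fst h
    rw [hf1, hu₀1, hk1c] at h1
    have h0 : ((k₁ : ℕ) : ZMod L) = 0 := by linear_combination h1
    exact hcast0 k₁ (by omega) hkL h0
  -- the auxiliary Pauli product B
  set B : Site L → PauliOp :=
    fun q => if q = u₀ then PauliOp.Z else if q = p then pflip (A p) else A q with hBdef
  have hBu : B u₀ = PauliOp.Z := by rw [hBdef]; simp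
  have hBp : B p = pflip (A p) := by rw [hBdef]; simp [hpu]
  have hBq : ∀ q, q ≠ u₀ → q ≠ p → B q = A q := by
    intro q h1 h2; rw [hBdef]; simp [h1, h2]
  have hBf : B f = A f := hBq f hfu hfp
  -- rows far from the box are trivial for A
  have hrow : ∀ (m : ℕ), k₁ ≤ m → m < L → ∀ q : Site L,
      q.1 = r.1 + (m : ZMod L) → A q = PauliOp.I := by
    intro m hm1 hm2 q hq
    by_contra h
    obtain ⟨⟨n, hn, hqn⟩, -⟩ := hsupp.1 q h
    rw [hqn] at hq
    have := natCast_zmod_inj (by omega : n < L) hm2 (add_left_cancel hq)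
    omega
  have hLm1 : ((L - 1 : ℕ) : ZMod L) = - 1 := by
    rw [Nat.cast_sub (by omega : 1 ≤ L), Nat.cast_one, ZMod.natCast_self]; ring
  have hLm2 : ((L - 2 : ℕ) : ZMod L) = - 2 := by
    rw [Nat.cast_sub (by omega : 2 ≤ L), ZMod.natCast_self]; push_cast; ring
  have hAm1 : ∀ q : Site L, q.1 = r.1 - 1 → A q = PauliOp.I := by
    intro q hq
    exact hrow (L - 1) (by omega) (by omega) q (by rw [hq, hLm1]; ring)
  have hAm2 : ∀ q : Site L, q.1 = r.1 - 2 → A q = PauliOp.I := by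
    intro q hq
    exact hrow (L - 2) (by omega) (by omega) q (by rw [hq, hLm2]; ring)
  have hBm1 : ∀ w : Site L, w.1 = r.1 - 1 → w ≠ u₀ → B w = PauliOp.I := by
    intro w hw hwu
    have hwp : w ≠ p := by
      intro h
      rw [h, hp1] at hw
      have h0 : ((1 : ℕ) : ZMod L) = 0 := by push_cast; linear_combination hw
      exact hcast0 1 one_pos (by omega) h0
    rw [hBq w hwu hwp]; exact hAm1 w hw
  have hBm2 : ∀ w : Site L, w.1 = r.1 - 2 → B w = PauliOp.I := by
    intro w hw
    have hwu : w ≠ u₀ := by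
      intro h
      rw [h, hu₀1] at hw
      have h0 : ((1 : ℕ) : ZMod L) = 0 := by push_cast; linear_combination hw
      exact hcast0 1 one_pos (by omega) h0
    have hwp : w ≠ p := by
      intro h
      rw [h, hp1] at hw
      have h0 : ((2 : ℕ) : ZMod L) = 0 := by push_cast; linear_combination hw
      exact hcast0 2 (by omega) (by omega) h0
    rw [hBq w hwu hwp]; exact hAm2 w hw
  have hAfI : A f ≠ PauliOp.I := by rcases hfXY with h | h <;> rw [h] <;> decide
  -- trace-coefficient dictionary
  have trc : ∀ C : Site L → PauliOp,
      Matrix.trace (pauliProd C * Q) = coeff Q C * 2 ^ Fintype.card (Site L) := by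
    intro C
    rw [coeff, div_mul_cancel₀]
    exact pow_ne_zero _ two_ne_zero
  have hdiffuf : f.1 = u₀.1 + (k₁ : ZMod L) := by
    rw [hf1, hu₀1, hk1c]; ring
  -- two ways a term of the master identity can vanish
  have closeFar : ∀ h : Site L → PauliOp,
      pmul (h u₀) (B u₀) ≠ PauliOp.I → pmul (h f) (B f) ≠ PauliOp.I →
      Tterm Q B h = 0 := by
    intro h h1 h2
    have hc : coeff Q (fun q => pmul (h q) (B q)) = 0 :=
      coeff_far hQ hk₁L _ u₀ f h1 h2 hdiffuf
    rw [Tterm, trc, hc, zero_mul, mul_zero]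
  have closeComm : ∀ h : Site L → PauliOp,
      (∀ q, pphase (h q) (B q) = pphase (B q) (h q)) → Tterm Q B h = 0 := by
    intro h hcm
    have hc : combCoef h B = 0 := by
      rw [combCoef, sub_eq_zero]
      exact Finset.prod_congr rfl fun q _ => hcm q
    rw [Tterm, hc, zero_mul]
  -- the transverse-field terms
  have LX : ∀ r' : Site L, Tterm Q B (singleSite r' PauliOp.X) = 0 := by
    intro r'
    by_cases hfr : f = r'
    · by_cases hAfX : A f = PauliOp.X
      · refine closeComm _ fun q => ?_
        by_cases hq : q = r'
        · have hBq' : B q = PauliOp.X := by rw [hq, ← hfr, hBf, hAfX]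
          simp only [singleSite, if_pos hq, hBq']
        · simp only [singleSite, if_neg hq, pphase_I_left, pphase_I_right]
      · have hAfY : A f = PauliOp.Y := by
          rcases hfXY with h | h
          · exact absurd h hAfX
          · exact h
        refine closeFar _ ?_ ?_
        · have hur : ¬(u₀ = r') := fun h => hfu (by rw [hfr, ← h])
          rw [hBu]; simp only [singleSite, if_neg hur]; decide
        · rw [hBf, hAfY]; simp only [singleSite, if_pos hfr]; decide
    · refine closeFar _ ?_ ?_
      · rw [hBu]; simp only [singleSite]
        by_cases hur : u₀ = r'
        · rw [if_pos hur]; decide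
        · rw [if_neg hur]; decide
      · rw [hBf]; simp only [singleSite, if_neg hfr]
        rw [pmul_I_left]; exact hAfI
  -- the longitudinal-field terms
  have LZ : ∀ r' : Site L, Tterm Q B (singleSite r' PauliOp.Z) = 0 := by
    intro r'
    by_cases hur : u₀ = r'
    · refine closeComm _ fun q => ?_
      by_cases hq : q = r'
      · have hBq' : B q = PauliOp.Z := by rw [hq, ← hur, hBu]
        simp only [singleSite, if_pos hq, hBq']
      · simp only [singleSite, if_neg hq, pphase_I_left, pphase_I_right]
    · refine closeFar _ ?_ ?_
      · rw [hBu]; simp only [singleSite, if_neg hur]; decide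
      · rw [hBf]; simp only [singleSite]
        by_cases hfr : f = r'
        · rw [if_pos hfr]
          rcases hfXY with h | h <;> rw [h] <;> decide
        · rw [if_neg hfr, pmul_I_left]; exact hAfI
  -- the horizontal Ising terms
  have LH : ∀ r' : Site L, Tterm Q B (twoSiteZZ r' (r'.1, r'.2 + 1)) = 0 := by
    intro r'
    set s : Site L := (r'.1, r'.2 + 1) with hsdef
    by_cases hmem : u₀ = r' ∨ u₀ = s
    · refine closeComm _ fun q => ?_
      by_cases hq : q = r' ∨ q = s
      · have hq1 : q.1 = u₀.1 := by
          have hque : q.1 = r'.1 := by rcases hq with h' | h' <;> rw [h']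
          have hue : u₀.1 = r'.1 := by rcases hmem with h | h <;> rw [h]
          rw [hque, hue]
        by_cases hqu : q = u₀
        · have hBq' : B q = PauliOp.Z := by rw [hqu, hBu]
          simp only [twoSiteZZ, if_pos hq, hBq']
        · have hBqI : B q = PauliOp.I := hBm1 q (by rw [hq1, hu₀1]) hqu
          simp only [twoSiteZZ, if_pos hq, hBqI, pphase_I_left, pphase_I_right]
      · simp only [twoSiteZZ, if_neg hq, pphase_I_left, pphase_I_right]
    · refine closeFar _ ?_ ?_
      · rw [hBu]; simp only [twoSiteZZ, if_neg hmem]; decide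
      · rw [hBf]; simp only [twoSiteZZ]
        by_cases hfs : f = r' ∨ f = s
        · rw [if_pos hfs]
          rcases hfXY with h | h <;> rw [h] <;> decide
        · rw [if_neg hfs, pmul_I_left]; exact hAfI
  -- the vertical Ising terms away from the special bond
  have LV : ∀ r' : Site L, r' ≠ u₀ → Tterm Q B (twoSiteZZ r' (r'.1 + 1, r'.2)) = 0 := by
    intro r' hne
    set s : Site L := (r'.1 + 1, r'.2) with hsdef
    by_cases hmem : u₀ = r' ∨ u₀ = s
    · have hus : u₀ = s := by
        rcases hmem with h | h
        · exact absurd h.symm hne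
        · exact h
      have hr'1 : r'.1 = r.1 - 2 := by
        have h1 : u₀.1 = r'.1 + 1 := by rw [hus]
        rw [hu₀1] at h1
        linear_combination - h1
      have hBr' : B r' = PauliOp.I := hBm2 r' hr'1
      refine closeComm _ fun q => ?_
      by_cases hq : q = r' ∨ q = s
      · rcases hq with h' | h'
        · rw [h']
          simp only [twoSiteZZ, if_pos (Or.inl rfl), hBr', pphase_I_left, pphase_I_right]
        · rw [h']
          have hBs : B s = PauliOp.Z := by rw [← hus, hBu]
          rw [show twoSiteZZ r' s s = PauliOp.Z by simp [twoSiteZZ], hBs]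
      · simp only [twoSiteZZ, if_neg hq, pphase_I_left, pphase_I_right]
    · refine closeFar _ ?_ ?_
      · rw [hBu]; simp only [twoSiteZZ, if_neg hmem]; decide
      · rw [hBf]; simp only [twoSiteZZ]
        by_cases hfs : f = r' ∨ f = s
        · rw [if_pos hfs]
          rcases hfXY with h | h <;> rw [h] <;> decide
        · rw [if_neg hfs, pmul_I_left]; exact hAfI
  -- the special bond
  have hsp : ((u₀.1 + 1 : ZMod L), u₀.2) = p := by
    have h1 : u₀.1 + 1 = p.1 := by rw [hu₀1, hp1]; ring
    rw [Prod.ext_iff]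
    exact ⟨h1, hu₀2⟩
  have hCeq : (fun q => pmul (twoSiteZZ u₀ p q) (B q)) = A := by
    funext q
    by_cases hq1 : q = u₀
    · rw [hq1]
      have hz' : twoSiteZZ u₀ p u₀ = PauliOp.Z := by simp [twoSiteZZ]
      rw [hz', hBu, hAm1 u₀ hu₀1]
      decide
    · by_cases hq2 : q = p
      · rw [hq2]
        have hz' : twoSiteZZ u₀ p p = PauliOp.Z := by simp [twoSiteZZ]
        rw [hz', hBp]
        rcases hpXY with h | h <;> rw [h] <;> rfl
      · have hz' : twoSiteZZ u₀ p q = PauliOp.I := by simp [twoSiteZZ, hq1, hq2]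
        rw [hz', hBq q hq1 hq2, pmul_I_left]
  have hupne : u₀ ≠ p := fun h => hpu h.symm
  have hIq : ∀ q : Site L, q ≠ u₀ → q ≠ p → twoSiteZZ u₀ p q = PauliOp.I := by
    intro q h1 h2; simp [twoSiteZZ, h1, h2]
  have hZu : twoSiteZZ u₀ p u₀ = PauliOp.Z := by simp [twoSiteZZ]
  have hZp : twoSiteZZ u₀ p p = PauliOp.Z := by simp [twoSiteZZ]
  have hccne : combCoef (twoSiteZZ u₀ p) B ≠ 0 := by
    have h1 : (∏ q : Site L, pphase (twoSiteZZ u₀ p q) (B q))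
        = pphase PauliOp.Z (B u₀) * pphase PauliOp.Z (B p) := by
      rw [prod_pair_eq _ u₀ p hupne (fun q hq1 hq2 => by rw [hIq q hq1 hq2, pphase_I_left]),
        hZu, hZp]
    have h2 : (∏ q : Site L, pphase (B q) (twoSiteZZ u₀ p q))
        = pphase (B u₀) PauliOp.Z * pphase (B p) PauliOp.Z := by
      rw [prod_pair_eq _ u₀ p hupne (fun q hq1 hq2 => by rw [hIq q hq1 hq2, pphase_I_right]),
        hZu, hZp]
    rw [combCoef, h1, h2, hBu, hBp]
    have eZZ : pphase PauliOp.Z PauliOp.Z = 1 := rfl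
    have eZY : pphase PauliOp.Z PauliOp.Y = -Complex.I := rfl
    have eYZ : pphase PauliOp.Y PauliOp.Z = Complex.I := rfl
    have eZX : pphase PauliOp.Z PauliOp.X = Complex.I := rfl
    have eXZ : pphase PauliOp.X PauliOp.Z = -Complex.I := rfl
    rcases hpXY with h | h <;> rw [h]
    · rw [show pflip PauliOp.X = PauliOp.Y from rfl, eZZ, eZY, eYZ]
      intro hc
      apply Complex.I_ne_zero
      linear_combination (-1/2 : ℂ) * hc
    · rw [show pflip PauliOp.Y = PauliOp.X from rfl, eZZ, eZX, eXZ]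
      intro hc
      apply Complex.I_ne_zero
      linear_combination (1/2 : ℂ) * hc
  -- assemble the master identity
  have hM := master J1 J2 hx hz Q hQ.1 B
  rw [Finset.sum_eq_single_of_mem u₀ (Finset.mem_univ _)
    (fun b _ hb => by rw [LV b hb, LH b, LX b, LZ b]; ring)] at hM
  rw [LH u₀, LX u₀, LZ u₀, hsp] at hM
  simp only [mul_zero, add_zero] at hM
  rw [Tterm, hCeq, trc] at hM
  rcases mul_eq_zero.mp hM with h | h
  · exact absurd h (Complex.ofReal_ne_zero.mpr hJ1)
  rcases mul_eq_zero.mp h with h' | h'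
  · exact absurd h' hccne
  rcases mul_eq_zero.mp h' with h'' | h''
  · exact h''
  · exact absurd h'' (pow_ne_zero _ two_ne_zero)

end Ising2D
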